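/- Let d, t be coprime positive integers and let A = Z/(2d/γ)Z × Z/(2t/γ)Z with γ ∈ {1, 2} (where γ divides both 2d and 2t). Then the subgroup K = {id, s} of Aut(A), where s(x, y) = (x, −y), is a normal subgroup of Aut(A). -/

import Mathlib

/-- If `y : ZMod m` is killed by `n` and `gcd n m ∣ 2`, then `y` is killed by `2`. -/
lemma aux_two_smul {m n : ℕ} (h2 : Nat.gcd n m ∣ 2) (y : ZMod m) (hy : n • y = 0) :
    2 • y = 0 := by
  have hm : m • y = 0 := by
    simp [nsmul_eq_mul, ZMod.natCast_self]
  have h1 : addOrderOf y ∣ n := addOrderOf_dvd_iff_nsmul_eq_zero.2 hy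
  have h2' : addOrderOf y ∣ m := addOrderOf_dvd_iff_nsmul_eq_zero.2 hm
  exact addOrderOf_dvd_iff_nsmul_eq_zero.1 ((Nat.dvd_gcd h1 h2').trans h2)

/-!
STATEMENT 11. Let `d, t` be coprime positive integers, `γ ∈ {1, 2}` dividing `2d` and `2t`,
and `A = ℤ/(2d/γ) × ℤ/(2t/γ)`.  The subgroup `K = {id, s}` of `Aut A`, where
`s(x, y) = (x, -y)`, is normal in `Aut A`.  (Since `s² = id`, `K` is the subgroup generated
by `s`.)
-/
theorem stmt_11 (d t γ : ℕ) (hd : 0 < d) (ht : 0 < t) (hdt : Nat.Coprime d t)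
    (hγ : γ = 1 ∨ γ = 2) (hγd : γ ∣ 2 * d) (hγt : γ ∣ 2 * t)
    (s : AddAut (ZMod (2 * d / γ) × ZMod (2 * t / γ)))
    (hs : s = AddEquiv.prodCongr (AddEquiv.refl (ZMod (2 * d / γ)))
        (AddEquiv.neg (ZMod (2 * t / γ)))) :
    (AddSubgroup.zmultiples s).Normal := by
  have hgcd : Nat.gcd (2 * t / γ) (2 * d / γ) ∣ 2 := by
    have htd : Nat.gcd t d = 1 := hdt.symm
    rcases hγ with rfl | rfl
    · simp only [Nat.div_one, Nat.gcd_mul_left, htd, Nat.mul_one]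
      exact dvd_rfl
    · simp only [Nat.mul_div_cancel_left _ (by norm_num : 0 < 2), htd]
      exact htd ▸ (Nat.one_dvd 2)
  -- s is central
  have hcomm : ∀ g : AddAut (ZMod (2 * d / γ) × ZMod (2 * t / γ)), AddCommute s g := by
    intro g
    have key1 : ∀ b : ZMod (2 * t / γ), 2 • (g (0, b)).1 = 0 := by
      intro b
      apply aux_two_smul hgcd
      have h : (2 * t / γ) • (g (0, b)) = g ((2 * t / γ) • ((0 : ZMod (2 * d / γ)), b)) :=
        (map_nsmul g _ _).symm
      have hb : (2 * t / γ) • ((0 : ZMod (2 * d / γ)), b) = 0 := by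
        ext <;> simp [nsmul_eq_mul, ZMod.natCast_self]
      have := congrArg Prod.fst (h.trans (by rw [hb, map_zero]))
      simpa using this
    have key2 : ∀ a : ZMod (2 * d / γ), 2 • (g (a, 0)).2 = 0 := by
      intro a
      apply aux_two_smul (Nat.gcd_comm _ _ ▸ hgcd)
      have h : (2 * d / γ) • (g (a, 0)) = g ((2 * d / γ) • (a, (0 : ZMod (2 * t / γ)))) :=
        (map_nsmul g _ _).symm
      have ha : (2 * d / γ) • (a, (0 : ZMod (2 * t / γ))) = 0 := by
        ext <;> simp [nsmul_eq_mul, ZMod.natCast_self]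
      have := congrArg Prod.snd (h.trans (by rw [ha, map_zero]))
      simpa using this
    have hpt : ∀ x, g (s x) = s (g x) := by
      rintro ⟨a, b⟩
      have hsplit : ((a, -b) : ZMod (2 * d / γ) × ZMod (2 * t / γ))
          = (a, (0 : ZMod (2 * t / γ))) - ((0 : ZMod (2 * d / γ)), b) := by
        ext <;> simp
      have hsab : s (a, b) = (a, -b) := by rw [hs]; rfl
      have hgab : g (a, b) = g (a, (0 : ZMod (2 * t / γ))) + g ((0 : ZMod (2 * d / γ)), b) := by
        rw [← map_add]; congr 1 <;> simp
      have happ : ∀ p : ZMod (2 * d / γ) × ZMod (2 * t / γ),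
          (AddEquiv.prodCongr (AddEquiv.refl (ZMod (2 * d / γ)))
            (AddEquiv.neg (ZMod (2 * t / γ)))) p = (p.1, -p.2) := fun p => rfl
      rw [hsab, hsplit, map_sub, hs, happ]
      ext
      · simp only [Prod.fst_sub, hgab, Prod.fst_add]
        have h1 := key1 b
        rw [two_nsmul] at h1
        linear_combination -h1
      · simp only [Prod.snd_sub, hgab, Prod.snd_add]
        have h2 := key2 a
        rw [two_nsmul] at h2
        linear_combination h2
    refine DFunLike.ext _ _ fun x => ?_
    rw [AddAut.add_apply, AddAut.add_apply]
    exact (hpt x).symm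
  constructor
  rintro x ⟨k, rfl⟩ g
  refine ⟨k, ?_⟩
  dsimp only
  rw [← ((hcomm g).zsmul_left k).eq, add_assoc, add_neg_cancel, add_zero]
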